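/- The term-rewriting system →_R on interactions is confluent: if i →_R* i1 and i →_R* i2 (where →_R* is the reflexive-transitive closure of →_R), then there exists j ∈ I with i1 →_R* j and i2 →_R* j. -/

import Mathlib

/-- An atomic communication action: the emission (`isEmission = true`) or
reception (`isEmission = false`) of a message on a lifeline. -/
structure MyAction (L M : Type) where
  lifeline : L
  isEmission : Bool
  message : M

/-- Interaction terms: constants are actions and the empty interaction,
`loopS` is unary, and `strict`, `alt` and `cr ℓ` (for every `ℓ ⊆ L`) are binary.
`seq = cr ∅` and `par = cr Set.univ`. -/
inductive Interaction (L M : Type) : Type where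
  | empty : Interaction L M
  | act : MyAction L M → Interaction L M
  | loopS : Interaction L M → Interaction L M
  | strict : Interaction L M → Interaction L M → Interaction L M
  | alt : Interaction L M → Interaction L M → Interaction L M
  | cr : Set L → Interaction L M → Interaction L M → Interaction L M

namespace Interaction

variable {L M : Type}

/-- The evasion predicate `i ↓ ℓ`. -/
inductive Evades : Interaction L M → Set L → Prop where
  | empty (ℓ : Set L) : Evades .empty ℓ
  | act (a : MyAction L M) (ℓ : Set L) : a.lifeline ∉ ℓ → Evades (.act a) ℓ
  | altL {i1 i2 : Interaction L M} {ℓ} : Evades i1 ℓ → Evades (.alt i1 i2) ℓ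
  | altR {i1 i2 : Interaction L M} {ℓ} : Evades i2 ℓ → Evades (.alt i1 i2) ℓ
  | strict {i1 i2 : Interaction L M} {ℓ} : Evades i1 ℓ → Evades i2 ℓ →
      Evades (.strict i1 i2) ℓ
  | cr {i1 i2 : Interaction L M} {ℓ' ℓ} : Evades i1 ℓ → Evades i2 ℓ →
      Evades (.cr ℓ' i1 i2) ℓ
  | loopS (i1 : Interaction L M) (ℓ : Set L) : Evades (.loopS i1) ℓ

/-- The pruning relation `i ⤳ℓ i'`. -/
inductive Prune : Interaction L M → Set L → Interaction L M → Prop where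
  | empty (ℓ : Set L) : Prune .empty ℓ .empty
  | act (a : MyAction L M) (ℓ : Set L) : a.lifeline ∉ ℓ → Prune (.act a) ℓ (.act a)
  | altL {i1 i2 i1' : Interaction L M} {ℓ} : Prune i1 ℓ i1' → ¬ Evades i2 ℓ →
      Prune (.alt i1 i2) ℓ i1'
  | altR {i1 i2 i2' : Interaction L M} {ℓ} : Prune i2 ℓ i2' → ¬ Evades i1 ℓ →
      Prune (.alt i1 i2) ℓ i2'
  | altBoth {i1 i2 i1' i2' : Interaction L M} {ℓ} : Prune i1 ℓ i1' → Prune i2 ℓ i2' →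
      Prune (.alt i1 i2) ℓ (.alt i1' i2')
  | strict {i1 i2 i1' i2' : Interaction L M} {ℓ} : Prune i1 ℓ i1' → Prune i2 ℓ i2' →
      Prune (.strict i1 i2) ℓ (.strict i1' i2')
  | cr {i1 i2 i1' i2' : Interaction L M} {ℓ' ℓ} : Prune i1 ℓ i1' → Prune i2 ℓ i2' →
      Prune (.cr ℓ' i1 i2) ℓ (.cr ℓ' i1' i2')
  | loopS {i1 i1' : Interaction L M} {ℓ} : Prune i1 ℓ i1' →
      Prune (.loopS i1) ℓ (.loopS i1')
  | loopSElim {i1 : Interaction L M} {ℓ} : ¬ Evades i1 ℓ → Prune (.loopS i1) ℓ .empty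

/-- The non-expression predicate `i ̸→a`. -/
inductive NoExpr : Interaction L M → MyAction L M → Prop where
  | empty (a : MyAction L M) : NoExpr .empty a
  | act {a' a : MyAction L M} : a' ≠ a → NoExpr (.act a') a
  | loopS {i1 : Interaction L M} {a} : NoExpr i1 a → NoExpr (.loopS i1) a
  | strictNoEvade {i1 i2 : Interaction L M} {a} : NoExpr i1 a →
      ¬ Evades i1 Set.univ → NoExpr (.strict i1 i2) a
  | strictBoth {i1 i2 : Interaction L M} {a} : NoExpr i1 a →
      NoExpr i2 a → NoExpr (.strict i1 i2) a
  | crNoEvade {i1 i2 : Interaction L M} {ℓ a} : NoExpr i1 a →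
      ¬ Evades i1 ({a.lifeline} \ ℓ) → NoExpr (.cr ℓ i1 i2) a
  | crBoth {i1 i2 : Interaction L M} {ℓ a} : NoExpr i1 a →
      NoExpr i2 a → NoExpr (.cr ℓ i1 i2) a
  | alt {i1 i2 : Interaction L M} {a} : NoExpr i1 a → NoExpr i2 a →
      NoExpr (.alt i1 i2) a

/-- The execution relation `i →a i'`. -/
inductive Exec : Interaction L M → MyAction L M → Interaction L M → Prop where
  | act (a : MyAction L M) : Exec (.act a) a .empty
  | loop {i1 i1' : Interaction L M} {a} : Exec i1 a i1' →
      Exec (.loopS i1) a (.strict i1' (.loopS i1))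
  | strictL {i1 i2 i1' : Interaction L M} {a} : Exec i1 a i1' →
      Exec (.strict i1 i2) a (.strict i1' i2)
  | crL {i1 i2 i1' : Interaction L M} {ℓ a} : Exec i1 a i1' →
      Exec (.cr ℓ i1 i2) a (.cr ℓ i1' i2)
  | strictR {i1 i2 i2' : Interaction L M} {a} : Exec i2 a i2' → Evades i1 Set.univ →
      Exec (.strict i1 i2) a i2'
  | crR {i1 i2 i1' i2' : Interaction L M} {ℓ a} : Exec i2 a i2' →
      Prune i1 ({a.lifeline} \ ℓ) i1' → Exec (.cr ℓ i1 i2) a (.cr ℓ i1' i2')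
  | altChoiceL {i1 i2 i1' : Interaction L M} {a} : Exec i1 a i1' → NoExpr i2 a →
      Exec (.alt i1 i2) a i1'
  | altChoiceR {i1 i2 i2' : Interaction L M} {a} : Exec i2 a i2' → NoExpr i1 a →
      Exec (.alt i1 i2) a i2'
  | altDelay {i1 i2 i1' i2' : Interaction L M} {a} : Exec i1 a i1' → Exec i2 a i2' →
      Exec (.alt i1 i2) a (.alt i1' i2')

/-- The trace semantics `σ(i)`, as a predicate: `Sem i t` iff `t ∈ σ(i)`. -/
inductive Sem : Interaction L M → List (MyAction L M) → Prop where
  | nil {i : Interaction L M} : Evades i Set.univ → Sem i []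
  | cons {i i' : Interaction L M} {a t} : Exec i a i' → Sem i' t → Sem i (a :: t)

/-- One execution step: `i → i'` iff `i →a i'` for some action `a`. -/
def Step (i i' : Interaction L M) : Prop := ∃ a, Exec i a i'

/-- `reach i = { i' | i →* i' }`. -/
def Reach (i : Interaction L M) : Set (Interaction L M) :=
  {i' | Relation.ReflTransGen Step i i'}

/-- One-step rewriting by the simplification system `R`, closed under contexts. -/
inductive Rw : Interaction L M → Interaction L M → Prop where
  | strictEmptyL (x : Interaction L M) : Rw (.strict .empty x) x
  | strictEmptyR (x : Interaction L M) : Rw (.strict x .empty) x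
  | crEmptyL (ℓ : Set L) (x : Interaction L M) : Rw (.cr ℓ .empty x) x
  | crEmptyR (ℓ : Set L) (x : Interaction L M) : Rw (.cr ℓ x .empty) x
  | altEmptyLoop (x : Interaction L M) : Rw (.alt .empty (.loopS x)) (.loopS x)
  | altLoopEmpty (x : Interaction L M) : Rw (.alt (.loopS x) .empty) (.loopS x)
  | altEmptyEmpty : Rw (Interaction.alt (L := L) (M := M) .empty .empty) .empty
  | loopEmpty : Rw (Interaction.loopS (L := L) (M := M) .empty) .empty
  | loopCongr {i i' : Interaction L M} : Rw i i' → Rw (.loopS i) (.loopS i')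
  | strictCongrL {i1 i1' i2 : Interaction L M} : Rw i1 i1' →
      Rw (.strict i1 i2) (.strict i1' i2)
  | strictCongrR {i1 i2 i2' : Interaction L M} : Rw i2 i2' →
      Rw (.strict i1 i2) (.strict i1 i2')
  | altCongrL {i1 i1' i2 : Interaction L M} : Rw i1 i1' → Rw (.alt i1 i2) (.alt i1' i2)
  | altCongrR {i1 i2 i2' : Interaction L M} : Rw i2 i2' → Rw (.alt i1 i2) (.alt i1 i2')
  | crCongrL {i1 i1' i2 : Interaction L M} {ℓ} : Rw i1 i1' →
      Rw (.cr ℓ i1 i2) (.cr ℓ i1' i2)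
  | crCongrR {i1 i2 i2' : Interaction L M} {ℓ} : Rw i2 i2' →
      Rw (.cr ℓ i1 i2) (.cr ℓ i1 i2')

end Interaction

open Interaction


namespace Interaction

variable {L M : Type}

/-- Normalization helpers -/
def nLoop : Interaction L M → Interaction L M
  | .empty => .empty
  | j => .loopS j

def nStrict : Interaction L M → Interaction L M → Interaction L M
  | .empty, b => b
  | a, .empty => a
  | a, b => .strict a b

def nCr (ℓ : Set L) : Interaction L M → Interaction L M → Interaction L M
  | .empty, b => b
  | a, .empty => a
  | a, b => .cr ℓ a b

def nAlt : Interaction L M → Interaction L M → Interaction L M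
  | .empty, .empty => .empty
  | .empty, .loopS x => .loopS x
  | .loopS x, .empty => .loopS x
  | a, b => .alt a b

def nf : Interaction L M → Interaction L M
  | .empty => .empty
  | .act a => .act a
  | .loopS i => nLoop (nf i)
  | .strict i1 i2 => nStrict (nf i1) (nf i2)
  | .alt i1 i2 => nAlt (nf i1) (nf i2)
  | .cr ℓ i1 i2 => nCr ℓ (nf i1) (nf i2)

open Relation

lemma rtg_loop {a b : Interaction L M} (h : ReflTransGen Rw a b) :
    ReflTransGen Rw (.loopS a) (.loopS b) :=
  ReflTransGen.lift (fun x => Interaction.loopS x) (fun _ _ => Rw.loopCongr) _ _ h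

lemma rtg_strict {a b a' b' : Interaction L M} (h1 : ReflTransGen Rw a a')
    (h2 : ReflTransGen Rw b b') : ReflTransGen Rw (.strict a b) (.strict a' b') :=
  .trans (ReflTransGen.lift (fun x => Interaction.strict x b) (fun _ _ => Rw.strictCongrL) _ _ h1)
    (ReflTransGen.lift (fun x => Interaction.strict a' x) (fun _ _ => Rw.strictCongrR) _ _ h2)

lemma rtg_alt {a b a' b' : Interaction L M} (h1 : ReflTransGen Rw a a')
    (h2 : ReflTransGen Rw b b') : ReflTransGen Rw (.alt a b) (.alt a' b') :=
  .trans (ReflTransGen.lift (fun x => Interaction.alt x b) (fun _ _ => Rw.altCongrL) _ _ h1)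
    (ReflTransGen.lift (fun x => Interaction.alt a' x) (fun _ _ => Rw.altCongrR) _ _ h2)

lemma rtg_cr {ℓ : Set L} {a b a' b' : Interaction L M} (h1 : ReflTransGen Rw a a')
    (h2 : ReflTransGen Rw b b') : ReflTransGen Rw (.cr ℓ a b) (.cr ℓ a' b') :=
  .trans (ReflTransGen.lift (fun x => Interaction.cr ℓ x b) (fun _ _ => Rw.crCongrL) _ _ h1)
    (ReflTransGen.lift (fun x => Interaction.cr ℓ a' x) (fun _ _ => Rw.crCongrR) _ _ h2)

lemma rtg_nLoop (a : Interaction L M) : ReflTransGen Rw (.loopS a) (nLoop a) := by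
  cases a <;> first | exact ReflTransGen.single Rw.loopEmpty | exact .refl

lemma rtg_nStrict (a b : Interaction L M) : ReflTransGen Rw (.strict a b) (nStrict a b) := by
  cases a <;> cases b <;>
    first
      | exact ReflTransGen.single (Rw.strictEmptyL _)
      | exact ReflTransGen.single (Rw.strictEmptyR _)
      | exact .refl

lemma rtg_nCr (ℓ : Set L) (a b : Interaction L M) :
    ReflTransGen Rw (.cr ℓ a b) (nCr ℓ a b) := by
  cases a <;> cases b <;>
    first
      | exact ReflTransGen.single (Rw.crEmptyL _ _)
      | exact ReflTransGen.single (Rw.crEmptyR _ _)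
      | exact .refl

lemma rtg_nAlt (a b : Interaction L M) : ReflTransGen Rw (.alt a b) (nAlt a b) := by
  cases a <;> cases b <;>
    first
      | exact ReflTransGen.single Rw.altEmptyEmpty
      | exact ReflTransGen.single (Rw.altEmptyLoop _)
      | exact ReflTransGen.single (Rw.altLoopEmpty _)
      | exact .refl

lemma rtg_nf (i : Interaction L M) : ReflTransGen Rw i (nf i) := by
  induction i with
  | empty => exact .refl
  | act a => exact .refl
  | loopS i ih => exact .trans (rtg_loop ih) (rtg_nLoop _)
  | strict i1 i2 ih1 ih2 => exact .trans (rtg_strict ih1 ih2) (rtg_nStrict _ _)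
  | alt i1 i2 ih1 ih2 => exact .trans (rtg_alt ih1 ih2) (rtg_nAlt _ _)
  | cr ℓ i1 i2 ih1 ih2 => exact .trans (rtg_cr ih1 ih2) (rtg_nCr _ _ _)

lemma nStrict_empty_left (a : Interaction L M) : nStrict .empty a = a := by
  cases a <;> rfl

lemma nCr_empty_left (ℓ : Set L) (a : Interaction L M) : nCr ℓ .empty a = a := by
  cases a <;> rfl

lemma nStrict_empty_right (a : Interaction L M) : nStrict a .empty = a := by
  cases a <;> rfl

lemma nCr_empty_right (ℓ : Set L) (a : Interaction L M) : nCr ℓ a .empty = a := by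
  cases a <;> rfl

lemma nAlt_empty_nLoop (a : Interaction L M) : nAlt .empty (nLoop a) = nLoop a := by
  cases a <;> rfl

lemma nAlt_nLoop_empty (a : Interaction L M) : nAlt (nLoop a) .empty = nLoop a := by
  cases a <;> rfl

lemma nf_rw {i i' : Interaction L M} (h : Rw i i') : nf i = nf i' := by
  induction h with
  | strictEmptyL x => exact nStrict_empty_left _
  | strictEmptyR x => exact nStrict_empty_right _
  | crEmptyL ℓ x => exact nCr_empty_left _ _
  | crEmptyR ℓ x => exact nCr_empty_right _ _
  | altEmptyLoop x => exact nAlt_empty_nLoop _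
  | altLoopEmpty x => exact nAlt_nLoop_empty _
  | altEmptyEmpty => rfl
  | loopEmpty => rfl
  | loopCongr _ ih => simp [nf, ih]
  | strictCongrL _ ih => simp [nf, ih]
  | strictCongrR _ ih => simp [nf, ih]
  | altCongrL _ ih => simp [nf, ih]
  | altCongrR _ ih => simp [nf, ih]
  | crCongrL _ ih => simp [nf, ih]
  | crCongrR _ ih => simp [nf, ih]

lemma nf_rtg {i i' : Interaction L M} (h : ReflTransGen Rw i i') : nf i = nf i' := by
  induction h with
  | refl => rfl
  | tail _ hstep ih => exact ih.trans (nf_rw hstep)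

end Interaction

/-- the rewriting system `→_R` is confluent. -/
theorem rw_confluent {L M : Type} [Finite L] [Finite M] (i i1 i2 : Interaction L M)
    (h1 : Relation.ReflTransGen Rw i i1) (h2 : Relation.ReflTransGen Rw i i2) :
    ∃ j, Relation.ReflTransGen Rw i1 j ∧ Relation.ReflTransGen Rw i2 j := by
  refine ⟨nf i, ?_, ?_⟩
  · rw [show nf i = nf i1 from nf_rtg h1]; exact rtg_nf i1
  · rw [show nf i = nf i2 from nf_rtg h2]; exact rtg_nf i2
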